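/- Let (R,m) be a two-dimensional Noetherian local ring, I = (a,b) an m-primary ideal generated by two elements, and J an m-primary ideal. Then for all n ≥ 1: ℓ(R/(Jⁿ : (aⁿ,bⁿ))) ≤ ℓ(R/(aⁿ,bⁿ)) + 2·ℓ(R/Jⁿ) − ℓ(R/(IⁿJⁿ)). -/

import Mathlib

/-- The composition length of an `R`-module `M`, as a real number
(the Krull dimension of its submodule lattice; junk value `0` if infinite). -/
noncomputable def rlen (R : Type*) [Ring R] (M : Type*) [AddCommGroup M] [Module R M] : ℝ :=
  (((WithBot.unbotD 0 (Order.krullDim (Submodule R M)))).toNat : ℝ)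

open Order
section
variable {α β γ : Type*} [Preorder α] [Preorder β] [Preorder γ]

lemma aux_height_le_add (f : γ → α) (g : γ → β) (hf : Monotone f) (hg : Monotone g)
    (h : ∀ ⦃x y : γ⦄, x < y → f x < f y ∨ g x < g y) (x : γ) :
    height x ≤ height (f x) + height (g x) := by
  have key : ∀ (l : ℕ) (p : LTSeries γ), p.length = l →
      (p.length : ℕ∞) ≤ height (f p.last) + height (g p.last) := by
    intro l
    induction l with
    | zero => intro p hp; rw [hp]; simp
    | succ l ih =>
      intro p hp
      have hne : p.length ≠ 0 := by omega
      have hlt := p.eraseLast_last_rel_last hne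
      have hle := ih p.eraseLast (by rw [RelSeries.eraseLast_length, hp]; omega)
      rw [show p.eraseLast.length = l by rw [RelSeries.eraseLast_length, hp]; omega] at hle
      rw [hp]
      have hcast : ((l + 1 : ℕ) : ℕ∞) = (l : ℕ∞) + 1 := by push_cast; ring
      rw [hcast]
      rcases h hlt with hs | hs
      · rcases eq_or_ne (height (f p.eraseLast.last)) ⊤ with htop | htop
        · have h2 : height (f p.last) = ⊤ :=
            top_le_iff.mp (htop ▸ height_mono (hf hlt.le))
          rw [h2, top_add]; exact le_top
        · have h1 : height (f p.eraseLast.last) + 1 ≤ height (f p.last) :=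
            (ENat.add_one_le_iff htop).mpr (height_strictMono hs htop.lt_top)
          calc (l : ℕ∞) + 1
              ≤ (height (f p.eraseLast.last) + height (g p.eraseLast.last)) + 1 :=
                add_le_add_left hle 1
            _ = (height (f p.eraseLast.last) + 1) + height (g p.eraseLast.last) := by
                ring
            _ ≤ height (f p.last) + height (g p.last) :=
                add_le_add h1 (height_mono (hg hlt.le))
      · rcases eq_or_ne (height (g p.eraseLast.last)) ⊤ with htop | htop
        · have h2 : height (g p.last) = ⊤ :=
            top_le_iff.mp (htop ▸ height_mono (hg hlt.le))
          rw [h2, add_top]; exact le_top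
        · have h1 : height (g p.eraseLast.last) + 1 ≤ height (g p.last) :=
            (ENat.add_one_le_iff htop).mpr (height_strictMono hs htop.lt_top)
          calc (l : ℕ∞) + 1
              ≤ (height (f p.eraseLast.last) + height (g p.eraseLast.last)) + 1 :=
                add_le_add_left hle 1
            _ = height (f p.eraseLast.last) + (height (g p.eraseLast.last) + 1) := by
                ring
            _ ≤ height (f p.last) + height (g p.last) :=
                add_le_add (height_mono (hf hlt.le)) h1
  refine height_le fun p hp => ?_
  rw [← hp]
  exact key p.length p rfl

lemma aux_ENat_add_le {a b c : ℕ∞}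
    (h : ∀ m n : ℕ, (m : ℕ∞) ≤ a → (n : ℕ∞) ≤ b → ((m + n : ℕ) : ℕ∞) ≤ c) : a + b ≤ c := by
  cases c with
  | top => exact le_top
  | coe k =>
    cases a with
    | top =>
      exfalso
      have := h (k + 1) 0 le_top (by simp)
      rw [Nat.add_zero] at this
      have : (k + 1 : ℕ) ≤ k := by exact_mod_cast this
      omega
    | coe i =>
      cases b with
      | top =>
        exfalso
        have := h 0 (k + 1) (by simp) le_top
        rw [Nat.zero_add] at this
        have : (k + 1 : ℕ) ≤ k := by exact_mod_cast this
        omega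
      | coe j =>
        exact_mod_cast h i j le_rfl le_rfl
end

section
variable {α β : Type*} [PartialOrder α] [Preorder β]

lemma aux_add_height_le (f : β → α) (hf : StrictMono f) (a : α) (hab : ∀ b, a ≤ f b) (x : β) :
    height a + height x ≤ height (f x) := by
  apply aux_ENat_add_le
  intro m n hm hn
  obtain ⟨p, hpl, hplen⟩ := exists_series_of_le_height a hm
  obtain ⟨q, hql, hqlen⟩ := exists_series_of_le_height x hn
  have hhead : p.last ≤ (q.map f hf).head := by
    rw [hpl, LTSeries.head_map]
    exact hab _
  rcases hhead.lt_or_eq with hlt | he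
  · have := length_le_height_last (p := p.append (q.map f hf) hlt)
    rw [RelSeries.append_length, RelSeries.last_append] at this
    rw [LTSeries.last_map, hql, LTSeries.map_length, hplen, hqlen] at this
    exact le_trans (by exact_mod_cast Nat.le_succ _) this
  · have := length_le_height_last (p := p.smash (q.map f hf) he)
    rw [RelSeries.smash_length, RelSeries.last_smash] at this
    rw [LTSeries.last_map, hql, LTSeries.map_length, hplen, hqlen] at this
    exact this
end


open Order

noncomputable def elen (R : Type*) [Ring R] (M : Type*) [AddCommGroup M] [Module R M] : ℕ∞ :=
  Order.height (⊤ : Submodule R M)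

section
variable {R : Type*} [Ring R] {M M' : Type*} [AddCommGroup M] [Module R M]
  [AddCommGroup M'] [Module R M']

lemma elen_le_of_injective (f : M →ₗ[R] M') (hf : Function.Injective f) :
    elen R M ≤ elen R M' := by
  have hsm : StrictMono (Submodule.map f) := fun x y hxy =>
    lt_of_le_of_ne (Submodule.map_mono hxy.le)
      (fun e => hxy.ne (Submodule.map_injective_of_injective hf e))
  exact le_trans (height_le_height_apply_of_strictMono _ hsm ⊤) (height_mono le_top)

lemma elen_le_of_surjective (f : M →ₗ[R] M') (hf : Function.Surjective f) :
    elen R M' ≤ elen R M := by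
  have hsm : StrictMono (Submodule.comap f) := fun x y hxy =>
    lt_of_le_of_ne (Submodule.comap_mono hxy.le)
      (fun e => hxy.ne (Submodule.comap_injective_of_surjective hf e))
  have := height_le_height_apply_of_strictMono _ hsm ⊤
  rwa [Submodule.comap_top] at this

lemma elen_congr (e : M ≃ₗ[R] M') : elen R M = elen R M' :=
  le_antisymm (elen_le_of_injective e.toLinearMap e.injective)
    (elen_le_of_surjective e.toLinearMap e.surjective)

lemma elen_le_add (N : Submodule R M) : elen R M ≤ elen R N + elen R (M ⧸ N) := by
  have key : ∀ ⦃x y : Submodule R M⦄, x < y →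
      x.comap N.subtype < y.comap N.subtype ∨ x.map N.mkQ < y.map N.mkQ := by
    intro x y hxy
    by_contra hc
    push_neg at hc
    obtain ⟨h1, h2⟩ := hc
    have e1 : x.comap N.subtype = y.comap N.subtype :=
      ((Submodule.comap_mono hxy.le).lt_or_eq).resolve_left h1
    have e2 : x.map N.mkQ = y.map N.mkQ :=
      ((Submodule.map_mono hxy.le).lt_or_eq).resolve_left h2
    refine hxy.not_ge ?_
    intro m hm
    have : N.mkQ m ∈ x.map N.mkQ := e2 ▸ Submodule.mem_map_of_mem hm
    obtain ⟨m', hm', hmk⟩ := this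
    have hsub : m - m' ∈ N := by
      have := (Submodule.Quotient.eq N).mp hmk
      simpa using N.neg_mem this
    have hy : (⟨m - m', hsub⟩ : N) ∈ y.comap N.subtype := by
      simpa [Submodule.mem_comap] using y.sub_mem hm (hxy.le hm')
    rw [← e1] at hy
    have hx : m - m' ∈ x := hy
    simpa [sub_add_cancel] using x.add_mem hx hm'
  have := aux_height_le_add (fun x : Submodule R M => x.comap N.subtype)
    (fun x => x.map N.mkQ) (fun _ _ h => Submodule.comap_mono h)
    (fun _ _ h => Submodule.map_mono h) key ⊤
  rwa [Submodule.comap_top, Submodule.map_top, Submodule.range_mkQ] at this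

lemma add_elen_le (N : Submodule R M) : elen R N + elen R (M ⧸ N) ≤ elen R M := by
  have hsm : StrictMono (Submodule.map N.subtype) := fun x y hxy =>
    lt_of_le_of_ne (Submodule.map_mono hxy.le)
      (fun e => hxy.ne (Submodule.map_injective_of_injective (Submodule.injective_subtype N) e))
  have h1 : elen R N ≤ height (N : Submodule R M) := by
    have := height_le_height_apply_of_strictMono _ hsm ⊤
    rwa [Submodule.map_subtype_top] at this
  have hsm2 : StrictMono (Submodule.comap N.mkQ) := fun x y hxy =>
    lt_of_le_of_ne (Submodule.comap_mono hxy.le)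
      (fun e => hxy.ne (Submodule.comap_injective_of_surjective N.mkQ_surjective e))
  have h2 : height (N : Submodule R M) + elen R (M ⧸ N) ≤ height (Submodule.comap N.mkQ ⊤) := by
    refine aux_add_height_le _ hsm2 N (fun b => fun x hx => ?_) ⊤
    show N.mkQ x ∈ b
    rw [show N.mkQ x = 0 from (Submodule.Quotient.mk_eq_zero N).mpr hx]
    exact b.zero_mem
  rw [Submodule.comap_top] at h2
  exact le_trans (add_le_add_left h1 _) h2

lemma elen_ne_top_of_isFiniteLength (h : IsFiniteLength R M) : elen R M ≠ ⊤ := by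
  induction h with
  | @of_subsingleton M _ _ _ =>
    have : (⊤ : Submodule R M) = ⊥ := Subsingleton.elim _ _
    rw [elen, this, height_bot]
    simp
  | @of_simple_quotient M _ _ N _ h ih =>
    have hsimple : elen R (M ⧸ N) ≤ 1 := by
      refine height_le fun p hp => ?_
      by_contra hlen
      push_neg at hlen
      have h2 : 2 ≤ p.length := by
        rcases p with ⟨l, _, _⟩
        simp only [RelSeries.length] at hlen ⊢
        by_contra hc
        interval_cases l <;> simp_all <;> norm_num at hlen
      have h01 : p ⟨0, by omega⟩ < p ⟨1, by omega⟩ := p.strictMono (by simp [Fin.lt_def])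
      have h12 : p ⟨1, by omega⟩ < p ⟨2, by omega⟩ := p.strictMono (by simp [Fin.lt_def])
      rcases eq_bot_or_eq_top (p ⟨1, by omega⟩) with hb | ht
      · rw [hb] at h01; exact (not_lt_bot h01)
      · rw [ht] at h12; exact (not_top_lt h12)
    have := elen_le_add N
    intro htop
    rw [htop, top_le_iff] at this
    have : elen R N + elen R (M ⧸ N) = ⊤ := this
    rcases (by rwa [ENat.add_eq_top] at this : elen R ↥N = ⊤ ∨ elen R (M ⧸ N) = ⊤) with h' | h'
    · exact ih h'
    · rw [h'] at hsimple; simp at hsimple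
end

section
variable {R : Type*} [CommRing R] {M : Type*} [AddCommGroup M] [Module R M]

lemma elen_ne_top_of_torsion [IsNoetherian R M] (I : Ideal R) [I.IsMaximal]
    (htor : Module.IsTorsionBySet R M I) : elen R M ≠ ⊤ := by
  letI : Module (R ⧸ I) M := htor.module
  haveI : IsScalarTower R (R ⧸ I) M := htor.isScalarTower
  haveI : Module.Finite R M := ⟨IsNoetherian.noetherian ⊤⟩
  haveI : Module.Finite (R ⧸ I) M := Module.Finite.of_restrictScalars_finite R (R ⧸ I) M
  haveI : IsNoetherian (R ⧸ I) M := isNoetherian_of_tower R inferInstance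
  haveI : IsArtinianRing (R ⧸ I) :=
    @DivisionRing.instIsArtinianRing _ (@Field.toDivisionRing _ (Ideal.Quotient.field I))
  haveI : IsArtinian (R ⧸ I) M := isArtinian_of_fg_of_artinian'
  have hfin : elen (R ⧸ I) M ≠ ⊤ :=
    elen_ne_top_of_isFiniteLength
      (isFiniteLength_iff_isNoetherian_isArtinian.mpr ⟨inferInstance, inferInstance⟩)
  -- build the order iso between R-submodules and R⧸I-submodules
  have hsurj : Function.Surjective (Submodule.restrictScalarsEmbedding R (R ⧸ I) M) := by
    intro p
    refine ⟨{ carrier := p, add_mem' := p.add_mem, zero_mem' := p.zero_mem,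
              smul_mem' := ?_ }, ?_⟩
    · intro c x hx
      obtain ⟨r, rfl⟩ := Ideal.Quotient.mk_surjective c
      have : (Ideal.Quotient.mk I r) • x = r • x := htor.mk_smul r x
      rw [this]
      exact p.smul_mem r hx
    · rfl
  let e : Submodule (R ⧸ I) M ≃o Submodule R M :=
    { toEquiv := Equiv.ofBijective _
        ⟨(Submodule.restrictScalarsEmbedding R (R ⧸ I) M).injective, hsurj⟩,
      map_rel_iff' := (Submodule.restrictScalarsEmbedding R (R ⧸ I) M).map_rel_iff }
  have htope : e ⊤ = ⊤ := by
    apply top_le_iff.mp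
    intro x _
    exact trivial
  have : elen R M = elen (R ⧸ I) M := by
    rw [elen, elen, ← htope, Order.height_orderIso e ⊤]
  rw [this]
  exact hfin
end

section
variable {R : Type*} [CommRing R] [IsNoetherianRing R] [IsLocalRing R]

lemma elen_quot_ne_top : ∀ (k : ℕ) (𝔞 : Ideal R),
    (IsLocalRing.maximalIdeal R) ^ k ≤ 𝔞 → elen R (R ⧸ 𝔞) ≠ ⊤ := by
  intro k
  induction k with
  | zero =>
    intro 𝔞 h𝔞
    rw [pow_zero, Ideal.one_eq_top, top_le_iff] at h𝔞
    haveI : Subsingleton (R ⧸ 𝔞) :=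
      Submodule.Quotient.subsingleton_iff.mpr h𝔞
    exact elen_ne_top_of_isFiniteLength .of_subsingleton
  | succ k ih =>
    intro 𝔞 h𝔞
    set m := IsLocalRing.maximalIdeal R with hm
    set 𝔟 : Ideal R := 𝔞 ⊔ m ^ k with h𝔟
    have hb : m ^ k ≤ 𝔟 := le_sup_right
    have hab : 𝔞 ≤ 𝔟 := le_sup_left
    set N : Submodule R (R ⧸ 𝔞) := Submodule.map (Submodule.mkQ 𝔞) 𝔟 with hN
    have hquot : elen R ((R ⧸ 𝔞) ⧸ N) = elen R (R ⧸ 𝔟) :=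
      elen_congr (Submodule.quotientQuotientEquivQuotient 𝔞 𝔟 hab)
    have hNtor : Module.IsTorsionBySet R N (m : Set R) := by
      rintro ⟨x, hx⟩ ⟨r, hr⟩
      obtain ⟨t, ht, rfl⟩ := hx
      apply Subtype.ext
      show r • (Submodule.mkQ 𝔞 t) = 0
      rw [← map_smul, Submodule.mkQ_apply, Submodule.Quotient.mk_eq_zero]
      obtain ⟨t₁, ht₁, t₂, ht₂, rfl⟩ := Submodule.mem_sup.mp ht
      have h1 : r • t₁ ∈ 𝔞 := 𝔞.smul_mem r ht₁
      have h2 : r • t₂ ∈ 𝔞 := by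
        apply h𝔞
        have : r * t₂ ∈ m * m ^ k := Ideal.mul_mem_mul hr ht₂
        rwa [← pow_succ'] at this
      rw [smul_add]; exact 𝔞.add_mem h1 h2
    haveI : IsNoetherian R (R ⧸ 𝔞) := inferInstance
    have hNfin : elen R N ≠ ⊤ := by
      haveI : (IsLocalRing.maximalIdeal R).IsMaximal := IsLocalRing.maximalIdeal.isMaximal R
      exact elen_ne_top_of_torsion (IsLocalRing.maximalIdeal R)
        hNtor
    have hle := elen_le_add N
    intro htop
    rw [htop, top_le_iff] at hle
    rcases (by rwa [ENat.add_eq_top] at hle :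
        elen R N = ⊤ ∨ elen R ((R ⧸ 𝔞) ⧸ N) = ⊤) with h' | h'
    · exact hNfin h'
    · rw [hquot] at h'
      exact ih 𝔟 hb h'
end

lemma rlen_eq_elen (R : Type*) [Ring R] (M : Type*) [AddCommGroup M] [Module R M] :
    rlen R M = ((elen R M).toNat : ℝ) := by
  rw [rlen, elen, ← Order.height_top_eq_krullDim, WithBot.unbotD_coe]


set_option maxHeartbeats 1000000 in
/-- length inequality
`ℓ(R/(Jⁿ : (aⁿ,bⁿ))) ≤ ℓ(R/(aⁿ,bⁿ)) + 2ℓ(R/Jⁿ) − ℓ(R/IⁿJⁿ)` in a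
two-dimensional Noetherian local ring, where `I = (a,b)`. -/
theorem stmt_12 (R : Type*) [CommRing R] [IsNoetherianRing R] [IsLocalRing R]
    (hdim : ringKrullDim R = 2)
    (a b : R) (I : Ideal R) (hIab : I = Ideal.span {a, b})
    (hI : I.radical = IsLocalRing.maximalIdeal R)
    (J : Ideal R) (hJ : J.radical = IsLocalRing.maximalIdeal R)
    (n : ℕ) (hn : 1 ≤ n) :
    rlen R (R ⧸ Submodule.colon (J ^ n) (Ideal.span {a ^ n, b ^ n})) ≤
      rlen R (R ⧸ Ideal.span {a ^ n, b ^ n}) + 2 * rlen R (R ⧸ J ^ n)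
        - rlen R (R ⧸ (I ^ n * J ^ n)) := by
  classical
  set m : Ideal R := IsLocalRing.maximalIdeal R with hm
  set A : Ideal R := Ideal.span {a ^ n, b ^ n} with hA
  set Jn : Ideal R := J ^ n with hJn
  set AJ : Ideal R := A * Jn with hAJ
  set co : Ideal R := Submodule.colon Jn A with hco
  set IJ : Ideal R := I ^ n * Jn with hIJ
  have haA : a ^ n ∈ A := Ideal.subset_span (by simp)
  have hbA : b ^ n ∈ A := Ideal.subset_span (by simp)
  have haI : a ∈ I := by rw [hIab]; exact Ideal.subset_span (by simp)
  have hbI : b ∈ I := by rw [hIab]; exact Ideal.subset_span (by simp)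
  have hAIn : A ≤ I ^ n := by
    rw [hA, Ideal.span_le]
    intro x hx
    rcases hx with rfl | hx
    · exact Ideal.pow_mem_pow haI n
    · rw [Set.mem_singleton_iff] at hx
      subst hx
      exact Ideal.pow_mem_pow hbI n
  have hAI : A ≤ I := by
    rw [hA, Ideal.span_le]
    intro x hx
    rcases hx with rfl | hx
    · exact I.pow_mem_of_mem haI n hn
    · rw [Set.mem_singleton_iff] at hx
      subst hx
      exact I.pow_mem_of_mem hbI n hn
  have hrad : A.radical = m := by
    apply le_antisymm
    · rw [← hI]; exact Ideal.radical_mono hAI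
    · rw [← hI]
      have hIrad : I ≤ A.radical := by
        rw [hIab, Ideal.span_le]
        intro x hx
        rcases hx with rfl | hx
        · exact Ideal.mem_radical_of_pow_mem (Ideal.le_radical haA)
        · rw [Set.mem_singleton_iff] at hx
          subst hx
          exact Ideal.mem_radical_of_pow_mem (Ideal.le_radical hbA)
      calc I.radical ≤ A.radical.radical := Ideal.radical_mono hIrad
        _ = A.radical := Ideal.radical_idem A
  -- finiteness of elen (R ⧸ A) and elen (R ⧸ Jn)
  have hAfin : elen R (R ⧸ A) ≠ ⊤ := by
    obtain ⟨s, hs⟩ := Ideal.exists_radical_pow_le_of_fg A (IsNoetherian.noetherian _)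
    rw [hrad] at hs
    exact elen_quot_ne_top s A hs
  have hJfin : elen R (R ⧸ Jn) ≠ ⊤ := by
    obtain ⟨s, hs⟩ := Ideal.exists_radical_pow_le_of_fg J (IsNoetherian.noetherian _)
    rw [hJ] at hs
    refine elen_quot_ne_top (s * n) Jn ?_
    rw [pow_mul, hJn]
    exact Ideal.pow_right_mono hs n
  -- the linear maps
  have hJa : Jn ≤ Submodule.comap (LinearMap.lsmul R R (a ^ n)) AJ := by
    intro j hj
    show (a ^ n) • j ∈ AJ
    rw [smul_eq_mul]
    exact Ideal.mul_mem_mul haA hj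
  have hJb : Jn ≤ Submodule.comap (LinearMap.lsmul R R (b ^ n)) AJ := by
    intro j hj
    show (b ^ n) • j ∈ AJ
    rw [smul_eq_mul]
    exact Ideal.mul_mem_mul hbA hj
  set f1 : (R ⧸ Jn) →ₗ[R] (R ⧸ AJ) := Submodule.mapQ Jn AJ (LinearMap.lsmul R R (a ^ n)) hJa
    with hf1
  set f2 : (R ⧸ Jn) →ₗ[R] (R ⧸ AJ) := Submodule.mapQ Jn AJ (LinearMap.lsmul R R (b ^ n)) hJb
    with hf2
  set ψ : ((R ⧸ Jn) × (R ⧸ Jn)) →ₗ[R] (R ⧸ AJ) :=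
    f1.comp (LinearMap.fst R _ _) + f2.comp (LinearMap.snd R _ _) with hψ
  set φ0 : R →ₗ[R] ((R ⧸ Jn) × (R ⧸ Jn)) :=
    LinearMap.prod ((Submodule.mkQ Jn).comp (LinearMap.lsmul R R (b ^ n)))
      (-((Submodule.mkQ Jn).comp (LinearMap.lsmul R R (a ^ n)))) with hφ0
  have hker0 : co ≤ LinearMap.ker φ0 := by
    intro r hr
    have h1 : r • (b ^ n) ∈ Jn := Submodule.mem_colon.mp hr _ hbA
    have h2 : r • (a ^ n) ∈ Jn := Submodule.mem_colon.mp hr _ haA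
    rw [LinearMap.mem_ker, hφ0]
    apply Prod.ext
    · show Submodule.mkQ Jn ((b ^ n) • r) = 0
      rw [Submodule.mkQ_apply, Submodule.Quotient.mk_eq_zero]
      rwa [smul_eq_mul, mul_comm, ← smul_eq_mul]
    · show -(Submodule.mkQ Jn ((a ^ n) • r)) = 0
      rw [neg_eq_zero, Submodule.mkQ_apply, Submodule.Quotient.mk_eq_zero]
      rwa [smul_eq_mul, mul_comm, ← smul_eq_mul]
  set φ : (R ⧸ co) →ₗ[R] ((R ⧸ Jn) × (R ⧸ Jn)) := Submodule.liftQ co φ0 hker0 with hφ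
  have hφinj : Function.Injective φ := by
    rw [← LinearMap.ker_eq_bot, hφ, Submodule.ker_liftQ_eq_bot]
    intro r hr
    rw [LinearMap.mem_ker, hφ0] at hr
    have h1 : (b ^ n) * r ∈ Jn := by
      have h := congrArg Prod.fst hr
      simp only [LinearMap.prod_apply, Function.prod, LinearMap.coe_comp, Function.comp_apply,
        Submodule.mkQ_apply, LinearMap.lsmul_apply, Prod.fst_zero] at h
      rw [← smul_eq_mul]
      exact (Submodule.Quotient.mk_eq_zero _).mp h
    have h2 : (a ^ n) * r ∈ Jn := by
      have h := congrArg Prod.snd hr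
      simp only [LinearMap.prod_apply, Function.prod, LinearMap.coe_comp, Function.comp_apply,
        Submodule.mkQ_apply, LinearMap.lsmul_apply, Prod.snd_zero, LinearMap.neg_apply,
        neg_eq_zero] at h
      rw [← smul_eq_mul]
      exact (Submodule.Quotient.mk_eq_zero _).mp h
    rw [hco]
    apply Submodule.mem_colon.mpr
    intro p hp
    obtain ⟨c₁, c₂, rfl⟩ := Ideal.mem_span_pair.mp (by rwa [hA] at hp)
    have : r • (c₁ * a ^ n + c₂ * b ^ n) = c₁ * (a ^ n * r) + c₂ * (b ^ n * r) := by
      rw [smul_eq_mul]; ring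
    rw [this]
    exact Jn.add_mem (Jn.mul_mem_left c₁ h2) (Jn.mul_mem_left c₂ h1)
  have hrangeker : ∀ x : R ⧸ co, φ x ∈ LinearMap.ker ψ := by
    intro x
    obtain ⟨r, rfl⟩ := Submodule.Quotient.mk_surjective co x
    rw [LinearMap.mem_ker]
    show ψ (φ0 r) = 0
    rw [hφ0, hψ]
    simp only [LinearMap.add_apply, LinearMap.coe_comp, Function.comp_apply,
      LinearMap.fst_apply, LinearMap.snd_apply, LinearMap.prod_apply, Function.prod,
      LinearMap.neg_apply, map_neg, hf1, hf2, Submodule.mkQ_apply,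
      Submodule.mapQ_apply, LinearMap.lsmul_apply]
    rw [← sub_eq_add_neg, ← Submodule.Quotient.mk_sub,
      show (a ^ n) • ((b ^ n) • r) - (b ^ n) • ((a ^ n) • r) = 0 by
        rw [smul_smul, smul_smul, mul_comm]; exact sub_self _,
      Submodule.Quotient.mk_zero]
  -- range of ψ
  have hrangeψ : LinearMap.range ψ = Submodule.map (Submodule.mkQ AJ) A := by
    apply le_antisymm
    · rintro z ⟨⟨u, v⟩, rfl⟩
      obtain ⟨r, rfl⟩ := Submodule.Quotient.mk_surjective Jn u
      obtain ⟨s, rfl⟩ := Submodule.Quotient.mk_surjective Jn v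
      refine ⟨(a ^ n) • r + (b ^ n) • s, ?_, ?_⟩
      · rw [hA]
        apply Ideal.mem_span_pair.mpr
        exact ⟨r, s, by rw [smul_eq_mul, smul_eq_mul]; ring⟩
      · rw [hψ]
        simp only [LinearMap.add_apply, LinearMap.coe_comp, Function.comp_apply,
          LinearMap.fst_apply, LinearMap.snd_apply, hf1, hf2, Submodule.mkQ_apply,
          Submodule.mapQ_apply, LinearMap.lsmul_apply]
        rw [← Submodule.Quotient.mk_add]
    · rintro z ⟨x, hx, rfl⟩
      obtain ⟨c₁, c₂, rfl⟩ := Ideal.mem_span_pair.mp (by rwa [hA] at hx)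
      refine ⟨(Submodule.Quotient.mk c₁, Submodule.Quotient.mk c₂), ?_⟩
      rw [hψ]
      simp only [LinearMap.add_apply, LinearMap.coe_comp, Function.comp_apply,
        LinearMap.fst_apply, LinearMap.snd_apply, hf1, hf2,
        Submodule.mapQ_apply, LinearMap.lsmul_apply, Submodule.mkQ_apply]
      rw [← Submodule.Quotient.mk_add]
      congr 1
      rw [smul_eq_mul, smul_eq_mul]
      ring
  -- counting
  have hX : elen R (R ⧸ co) ≤ elen R (LinearMap.ker ψ) := by
    refine elen_le_of_injective (LinearMap.codRestrict (LinearMap.ker ψ) φ hrangeker) ?_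
    intro x y hxy
    exact hφinj (congrArg Subtype.val hxy)
  have hC : elen R (R ⧸ IJ) ≤ elen R (R ⧸ AJ) := by
    have hle : AJ ≤ IJ := by
      rw [hAJ, hIJ]
      exact Ideal.mul_mono hAIn le_rfl
    refine elen_le_of_surjective (Submodule.mapQ AJ IJ LinearMap.id (by simpa using hle)) ?_
    intro z
    obtain ⟨x, rfl⟩ := Submodule.Quotient.mk_surjective IJ z
    exact ⟨Submodule.Quotient.mk x, by rw [Submodule.mapQ_apply]; rfl⟩
  have hT : elen R (R ⧸ AJ) ≤ elen R (LinearMap.range ψ) + elen R (R ⧸ A) := by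
    have h1 := elen_le_add (LinearMap.range ψ)
    have h2 : elen R ((R ⧸ AJ) ⧸ (LinearMap.range ψ)) = elen R (R ⧸ A) := by
      rw [hrangeψ]
      exact elen_congr (Submodule.quotientQuotientEquivQuotient AJ A
        (hAJ ▸ Ideal.mul_le_left))
    rwa [h2] at h1
  have hWB : elen R ((R ⧸ Jn) × (R ⧸ Jn)) ≤ elen R (R ⧸ Jn) + elen R (R ⧸ Jn) := by
    set sn := LinearMap.snd R (R ⧸ Jn) (R ⧸ Jn) with hsn
    have hsurj_s : Function.Surjective sn := fun y => ⟨(0, y), rfl⟩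
    have e1 : elen R (((R ⧸ Jn) × (R ⧸ Jn)) ⧸ LinearMap.ker sn) = elen R (R ⧸ Jn) :=
      elen_congr (sn.quotKerEquivOfSurjective hsurj_s)
    have e2 : elen R (LinearMap.ker sn) ≤ elen R (R ⧸ Jn) := by
      refine elen_le_of_injective ((LinearMap.fst R _ _).comp (LinearMap.ker sn).subtype) ?_
      rintro ⟨⟨x1, x2⟩, hx⟩ ⟨⟨y1, y2⟩, hy⟩ hxy
      rw [LinearMap.mem_ker] at hx hy
      apply Subtype.ext
      have hx2 : x2 = 0 := hx
      have hy2 : y2 = 0 := hy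
      have hx1 : x1 = y1 := hxy
      simp [Prod.ext_iff, hx2, hy2, hx1]
    have h := elen_le_add (LinearMap.ker sn)
    rw [e1] at h
    exact le_trans h (add_le_add_left e2 _)
  have hkerrange : elen R (LinearMap.ker ψ) + elen R (LinearMap.range ψ) ≤
      elen R ((R ⧸ Jn) × (R ⧸ Jn)) := by
    have h := add_elen_le (LinearMap.ker ψ)
    have e : elen R (((R ⧸ Jn) × (R ⧸ Jn)) ⧸ LinearMap.ker ψ) = elen R (LinearMap.range ψ) :=
      elen_congr ψ.quotKerEquivRange
    rwa [e] at h
  have key : elen R (R ⧸ co) + elen R (R ⧸ IJ) ≤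
      (elen R (R ⧸ Jn) + elen R (R ⧸ Jn)) + elen R (R ⧸ A) := by
    calc elen R (R ⧸ co) + elen R (R ⧸ IJ)
        ≤ elen R (LinearMap.ker ψ) + elen R (R ⧸ AJ) := add_le_add hX hC
      _ ≤ elen R (LinearMap.ker ψ) + (elen R (LinearMap.range ψ) + elen R (R ⧸ A)) :=
          add_le_add_right hT _
      _ = (elen R (LinearMap.ker ψ) + elen R (LinearMap.range ψ)) + elen R (R ⧸ A) := by ring
      _ ≤ elen R ((R ⧸ Jn) × (R ⧸ Jn)) + elen R (R ⧸ A) := add_le_add_left hkerrange _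
      _ ≤ (elen R (R ⧸ Jn) + elen R (R ⧸ Jn)) + elen R (R ⧸ A) := add_le_add_left hWB _
  -- realification
  have hRHS : (elen R (R ⧸ Jn) + elen R (R ⧸ Jn)) + elen R (R ⧸ A) ≠ ⊤ := by
    intro h
    rcases ENat.add_eq_top.mp h with h' | h'
    · rcases ENat.add_eq_top.mp h' with h'' | h''
      exacts [hJfin h'', hJfin h'']
    · exact hAfin h'
  have hXfin : elen R (R ⧸ co) ≠ ⊤ := by
    intro h
    apply hRHS
    exact top_le_iff.mp (by calc (⊤ : ℕ∞) = elen R (R ⧸ co) := h.symm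
      _ ≤ elen R (R ⧸ co) + elen R (R ⧸ IJ) := le_self_add
      _ ≤ _ := key)
  have hCfin : elen R (R ⧸ IJ) ≠ ⊤ := by
    intro h
    apply hRHS
    exact top_le_iff.mp (by calc (⊤ : ℕ∞) = elen R (R ⧸ IJ) := h.symm
      _ ≤ elen R (R ⧸ co) + elen R (R ⧸ IJ) := le_add_self
      _ ≤ _ := key)
  have keyN : (elen R (R ⧸ co)).toNat + (elen R (R ⧸ IJ)).toNat ≤
      ((elen R (R ⧸ Jn)).toNat + (elen R (R ⧸ Jn)).toNat) + (elen R (R ⧸ A)).toNat := by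
    have h := ENat.toNat_le_toNat key hRHS
    rwa [ENat.toNat_add hXfin hCfin,
      ENat.toNat_add (fun h => by rcases ENat.add_eq_top.mp h with h' | h'; exacts [hJfin h', hJfin h']) hAfin,
      ENat.toNat_add hJfin hJfin] at h
  rw [rlen_eq_elen, rlen_eq_elen, rlen_eq_elen, rlen_eq_elen]
  have keyR : ((elen R (R ⧸ co)).toNat : ℝ) + ((elen R (R ⧸ IJ)).toNat : ℝ) ≤
      (((elen R (R ⧸ Jn)).toNat : ℝ) + ((elen R (R ⧸ Jn)).toNat : ℝ)) +
        ((elen R (R ⧸ A)).toNat : ℝ) := by exact_mod_cast keyN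
  linarith
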